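/- (Cartan, 1924; direct-sum part of the classification of metric torsion tensors.) Let V be a finite-dimensional real inner product space with dim V ≥ 3. Then 𝒯(V) is the internal direct sum of the subspaces 𝒯₁(V), 𝒯₂(V) and 𝒯₃(V): every A ∈ 𝒯(V) can be written as A = A₁ + A₂ + A₃ with Aᵢ ∈ 𝒯ᵢ(V) (i = 1,2,3), and this decomposition is unique. -/

import Mathlib

open scoped RealInnerProductSpace BigOperators

set_option linter.unusedSectionVars false
set_option maxHeartbeats 1000000

variable {V : Type*} [NormedAddCommGroup V] [InnerProductSpace ℝ V] [FiniteDimensional ℝ V]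

/-- The space `𝒯(V)` of algebraic torsion tensors: trilinear forms that are
antisymmetric in the last two arguments. -/
def IsTorsionTensor (A : V →ₗ[ℝ] V →ₗ[ℝ] V →ₗ[ℝ] ℝ) : Prop :=
  ∀ X Y Z : V, A X Y Z = - A X Z Y

/-- `𝒯₁(V)`: vectorial torsion tensors. -/
def IsVectorialTorsion (A : V →ₗ[ℝ] V →ₗ[ℝ] V →ₗ[ℝ] ℝ) : Prop :=
  IsTorsionTensor A ∧
    ∃ v : V, ∀ X Y Z : V, A X Y Z = ⟪X, Y⟫ * ⟪v, Z⟫ - ⟪X, Z⟫ * ⟪v, Y⟫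

/-- `𝒯₂(V)`: totally antisymmetric torsion tensors. -/
def IsTotallyAntisymmetricTorsion (A : V →ₗ[ℝ] V →ₗ[ℝ] V →ₗ[ℝ] ℝ) : Prop :=
  IsTorsionTensor A ∧ ∀ X Y Z : V, A X Y Z = - A Y X Z

/-- The contraction `c₁₂(A)(Z) = ∑ᵢ A(eᵢ, eᵢ, Z)` over an orthonormal basis. -/
noncomputable def c12 (A : V →ₗ[ℝ] V →ₗ[ℝ] V →ₗ[ℝ] ℝ) (Z : V) : ℝ :=
  ∑ i, A (stdOrthonormalBasis ℝ V i) (stdOrthonormalBasis ℝ V i) Z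

/-- `𝒯₃(V)`: torsion tensors of Cartan type. -/
def IsCartanTorsion (A : V →ₗ[ℝ] V →ₗ[ℝ] V →ₗ[ℝ] ℝ) : Prop :=
  IsTorsionTensor A ∧ (∀ X Y Z : V, A X Y Z + A Y Z X + A Z X Y = 0) ∧
    ∀ Z : V, c12 A Z = 0

noncomputable instance instACG3 : AddCommGroup (V →ₗ[ℝ] V →ₗ[ℝ] V →ₗ[ℝ] ℝ) :=
  @LinearMap.addCommGroup ℝ ℝ V (V →ₗ[ℝ] V →ₗ[ℝ] ℝ) _ _ _ LinearMap.addCommGroup _ _ (RingHom.id ℝ)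

@[simp] lemma sub_apply3 (A B : V →ₗ[ℝ] V →ₗ[ℝ] V →ₗ[ℝ] ℝ) (X : V) :
    (A - B) X = A X - B X := rfl

/-- Cartan (1924), direct-sum part: for `dim V ≥ 3`, every torsion tensor decomposes
uniquely as a sum of a vectorial, a totally antisymmetric and a Cartan-type torsion
tensor. -/
noncomputable def inr (x : V) : V →ₗ[ℝ] ℝ where
  toFun z := ⟪x, z⟫
  map_add' a b := inner_add_right x a b
  map_smul' c a := real_inner_smul_right x a c

noncomputable def cyc (A : V →ₗ[ℝ] V →ₗ[ℝ] V →ₗ[ℝ] ℝ) : V →ₗ[ℝ] V →ₗ[ℝ] V →ₗ[ℝ] ℝ :=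
  (LinearMap.lflip.comp A).flip

@[simp] lemma cyc_apply (A : V →ₗ[ℝ] V →ₗ[ℝ] V →ₗ[ℝ] ℝ) (X Y Z : V) :
    cyc A X Y Z = A Y Z X := rfl

noncomputable def T1 (v : V) : V →ₗ[ℝ] V →ₗ[ℝ] V →ₗ[ℝ] ℝ :=
  LinearMap.mk₂ ℝ (fun X Y => ⟪X, Y⟫ • inr v - ⟪v, Y⟫ • inr X)
    (fun X X' Y => by ext Z; simp [inr, inner_add_left, inner_add_right]; ring)
    (fun c X Y => by ext Z; simp [inr, real_inner_smul_left, real_inner_smul_right]; ring)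
    (fun X Y Y' => by ext Z; simp [inr, inner_add_left, inner_add_right]; ring)
    (fun c X Y => by ext Z; simp [inr, real_inner_smul_left, real_inner_smul_right]; ring)

@[simp] lemma T1_apply (v X Y Z : V) :
    T1 v X Y Z = ⟪X, Y⟫ * ⟪v, Z⟫ - ⟪X, Z⟫ * ⟪v, Y⟫ := by
  simp [T1, inr]; ring

lemma key_sum (v Z : V) :
    ∑ i, (⟪stdOrthonormalBasis ℝ V i, stdOrthonormalBasis ℝ V i⟫ * ⟪v, Z⟫
      - ⟪stdOrthonormalBasis ℝ V i, Z⟫ * ⟪v, stdOrthonormalBasis ℝ V i⟫)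
      = ((Module.finrank ℝ V : ℝ) - 1) * ⟪v, Z⟫ := by
  have h1 : ∀ i, ⟪stdOrthonormalBasis ℝ V i, stdOrthonormalBasis ℝ V i⟫ = (1 : ℝ) := by
    intro i
    have := (stdOrthonormalBasis ℝ V).orthonormal.1 i
    rw [@norm_eq_sqrt_real_inner] at this
    nlinarith [Real.sq_sqrt (real_inner_self_nonneg (x := stdOrthonormalBasis ℝ V i)),
      real_inner_self_nonneg (x := stdOrthonormalBasis ℝ V i)]
  rw [Finset.sum_sub_distrib]
  have h2 : ∑ i, ⟪stdOrthonormalBasis ℝ V i, Z⟫ * ⟪v, stdOrthonormalBasis ℝ V i⟫ = ⟪v, Z⟫ := by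
    have := (stdOrthonormalBasis ℝ V).sum_inner_mul_inner v Z
    rw [← this]
    exact Finset.sum_congr rfl fun i _ => by ring
  simp [h1, h2, Finset.card_univ]
  ring

lemma c12_of_formula (B : V →ₗ[ℝ] V →ₗ[ℝ] V →ₗ[ℝ] ℝ) (v : V)
    (hB : ∀ X Y Z : V, B X Y Z = ⟪X, Y⟫ * ⟪v, Z⟫ - ⟪X, Z⟫ * ⟪v, Y⟫) (Z : V) :
    c12 B Z = ((Module.finrank ℝ V : ℝ) - 1) * ⟪v, Z⟫ := by
  rw [c12, ← key_sum v Z]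
  exact Finset.sum_congr rfl fun i _ => hB _ _ _

/-- If a sum of a vectorial, antisymmetric and Cartan torsion is zero, all vanish. -/
lemma zero_sum_case (hdim : 3 ≤ Module.finrank ℝ V)
    {B₁ B₂ B₃ : V →ₗ[ℝ] V →ₗ[ℝ] V →ₗ[ℝ] ℝ}
    (h₁ : IsVectorialTorsion B₁) (h₂ : IsTotallyAntisymmetricTorsion B₂)
    (h₃ : IsCartanTorsion B₃) (hsum : B₁ + B₂ + B₃ = 0) :
    B₁ = 0 ∧ B₂ = 0 ∧ B₃ = 0 := by
  obtain ⟨-, v, hv⟩ := h₁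
  have hpt : ∀ X Y Z : V, B₁ X Y Z + B₂ X Y Z + B₃ X Y Z = 0 := by
    intro X Y Z
    have := LinearMap.congr_fun (LinearMap.congr_fun (LinearMap.congr_fun hsum X) Y) Z
    simpa using this
  -- B₂ vanishes
  have hB₂ : ∀ X Y Z : V, B₂ X Y Z = 0 := by
    intro X Y Z
    have e1 := hpt X Y Z
    have e2 := hpt Y Z X
    have e3 := hpt Z X Y
    rw [hv] at e1 e2 e3
    rw [real_inner_comm X Y] at e2
    rw [real_inner_comm X Z, real_inner_comm Y Z] at e3
    have c3 := h₃.2.1 X Y Z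
    have a1 := h₂.2 Y Z X
    have a2 := h₂.1 Z Y X
    have a3 := h₂.2 Z X Y
    have a4 := h₂.1 X Z Y
    linarith
  -- hence B₁ = -B₃ pointwise, and c12 kills v
  have hvZ : ∀ Z : V, ⟪v, Z⟫ = 0 := by
    intro Z
    have hc1 : c12 B₁ Z = ((Module.finrank ℝ V : ℝ) - 1) * ⟪v, Z⟫ := c12_of_formula B₁ v hv Z
    have hc3 := h₃.2.2 Z
    have hsum' : c12 B₁ Z + c12 B₃ Z = 0 := by
      rw [c12, c12, ← Finset.sum_add_distrib]
      refine Finset.sum_eq_zero fun i _ => ?_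
      have := hpt (stdOrthonormalBasis ℝ V i) (stdOrthonormalBasis ℝ V i) Z
      rw [hB₂] at this
      linarith
    have hne : ((Module.finrank ℝ V : ℝ) - 1) ≠ 0 := by
      have : (3 : ℝ) ≤ (Module.finrank ℝ V : ℝ) := by exact_mod_cast hdim
      linarith
    have : ((Module.finrank ℝ V : ℝ) - 1) * ⟪v, Z⟫ = 0 := by rw [← hc1]; linarith
    exact (mul_eq_zero.mp this).resolve_left hne
  have hB₁ : ∀ X Y Z : V, B₁ X Y Z = 0 := fun X Y Z => by rw [hv, hvZ, hvZ]; ring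
  have hB₃ : ∀ X Y Z : V, B₃ X Y Z = 0 := fun X Y Z => by
    have := hpt X Y Z; rw [hB₁, hB₂] at this; linarith
  refine ⟨?_, ?_, ?_⟩ <;> (ext X Y Z; simp [hB₁, hB₂, hB₃])

theorem cartan_direct_sum_decomposition
    (hdim : 3 ≤ Module.finrank ℝ V)
    (A : V →ₗ[ℝ] V →ₗ[ℝ] V →ₗ[ℝ] ℝ) (hA : IsTorsionTensor A) :
    ∃! p : (V →ₗ[ℝ] V →ₗ[ℝ] V →ₗ[ℝ] ℝ) × (V →ₗ[ℝ] V →ₗ[ℝ] V →ₗ[ℝ] ℝ) ×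
        (V →ₗ[ℝ] V →ₗ[ℝ] V →ₗ[ℝ] ℝ),
      IsVectorialTorsion p.1 ∧ IsTotallyAntisymmetricTorsion p.2.1 ∧
        IsCartanTorsion p.2.2 ∧ A = p.1 + p.2.1 + p.2.2 := by
  classical
  set n : ℕ := Module.finrank ℝ V with hn
  -- the contraction functional and the Riesz vector
  set φ : V →ₗ[ℝ] ℝ := ∑ i, A (stdOrthonormalBasis ℝ V i) (stdOrthonormalBasis ℝ V i) with hφ
  have hφ_apply : ∀ Z : V, φ Z = c12 A Z := by
    intro Z; rw [hφ, c12]; simp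
  set v₀ : V := (InnerProductSpace.toDual ℝ V).symm (LinearMap.toContinuousLinearMap φ) with hv₀
  have hv₀_inner : ∀ Z : V, ⟪v₀, Z⟫ = φ Z := by
    intro Z
    rw [hv₀]
    exact InnerProductSpace.toDual_symm_apply
  set v : V := (((n : ℝ) - 1)⁻¹) • v₀ with hvdef
  have hne : ((n : ℝ) - 1) ≠ 0 := by
    have : (3 : ℝ) ≤ (n : ℝ) := by exact_mod_cast hdim
    linarith
  have hv_inner : ∀ Z : V, ((n : ℝ) - 1) * ⟪v, Z⟫ = c12 A Z := by
    intro Z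
    rw [hvdef, real_inner_smul_left, hv₀_inner, hφ_apply]
    field_simp
  set A₁ : V →ₗ[ℝ] V →ₗ[ℝ] V →ₗ[ℝ] ℝ := T1 v with hA₁
  set A₂ : V →ₗ[ℝ] V →ₗ[ℝ] V →ₗ[ℝ] ℝ := (3 : ℝ)⁻¹ • (A + cyc A + cyc (cyc A)) with hA₂
  set A₃ : V →ₗ[ℝ] V →ₗ[ℝ] V →ₗ[ℝ] ℝ := A - A₁ - A₂ with hA₃
  have hA₁app : ∀ X Y Z : V, A₁ X Y Z = ⟪X, Y⟫ * ⟪v, Z⟫ - ⟪X, Z⟫ * ⟪v, Y⟫ := by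
    intro X Y Z; rw [hA₁]; exact T1_apply v X Y Z
  have hA₂app : ∀ X Y Z : V, A₂ X Y Z = (3:ℝ)⁻¹ * (A X Y Z + A Y Z X + A Z X Y) := by
    intro X Y Z; rw [hA₂]; simp; ring
  have hA₃app : ∀ X Y Z : V, A₃ X Y Z = A X Y Z - A₁ X Y Z - A₂ X Y Z := by
    intro X Y Z; rw [hA₃]; simp
  -- properties
  have p1 : IsVectorialTorsion A₁ := by
    constructor
    · intro X Y Z; rw [hA₁app, hA₁app]; ring
    · exact ⟨v, hA₁app⟩
  have p2 : IsTotallyAntisymmetricTorsion A₂ := by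
    constructor
    · intro X Y Z
      rw [hA₂app, hA₂app]
      have := hA X Y Z; have := hA Y Z X; have := hA Z X Y
      have := hA Y X Z; have := hA Z Y X; have := hA X Z Y
      linarith
    · intro X Y Z
      rw [hA₂app, hA₂app]
      have := hA X Y Z; have := hA Y Z X; have := hA Z X Y
      have := hA Y X Z; have := hA Z Y X; have := hA X Z Y
      linarith
  have c12A₂ : ∀ Z, c12 A₂ Z = 0 := by
    intro Z
    rw [c12]
    refine Finset.sum_eq_zero fun i _ => ?_
    rw [hA₂app]
    have h1 := hA (stdOrthonormalBasis ℝ V i) (stdOrthonormalBasis ℝ V i) Z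
    have h2 := hA (stdOrthonormalBasis ℝ V i) Z (stdOrthonormalBasis ℝ V i)
    have h3 := hA Z (stdOrthonormalBasis ℝ V i) (stdOrthonormalBasis ℝ V i)
    linarith
  have c12A₁ : ∀ Z, c12 A₁ Z = c12 A Z := by
    intro Z
    rw [c12_of_formula A₁ v hA₁app Z, ← hv_inner]
  have p3 : IsCartanTorsion A₃ := by
    refine ⟨?_, ?_, ?_⟩
    · intro X Y Z
      rw [hA₃app, hA₃app, hA₁app, hA₁app, hA₂app, hA₂app]
      have := hA X Y Z; have := hA Y Z X; have := hA Z X Y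
      have := hA Y X Z; have := hA Z Y X; have := hA X Z Y
      linarith
    · intro X Y Z
      rw [hA₃app, hA₃app, hA₃app, hA₁app, hA₁app, hA₁app,
        hA₂app, hA₂app, hA₂app]
      rw [real_inner_comm X Y, real_inner_comm X Z, real_inner_comm Y Z]
      ring
    · intro Z
      have : c12 A₃ Z = c12 A Z - c12 A₁ Z - c12 A₂ Z := by
        rw [c12, c12, c12, c12]
        rw [← Finset.sum_sub_distrib, ← Finset.sum_sub_distrib]
        exact Finset.sum_congr rfl fun i _ => by rw [hA₃app]
      rw [this, c12A₁, c12A₂]; ring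
  refine ⟨(A₁, A₂, A₃), ⟨p1, p2, p3, by rw [hA₃]; module⟩, ?_⟩
  rintro ⟨B₁, B₂, B₃⟩ ⟨q1, q2, q3, hq⟩
  -- differences
  have d1 : IsVectorialTorsion (B₁ - A₁) := by
    obtain ⟨t1, w, hw⟩ := q1
    refine ⟨fun X Y Z => by simp [t1 X Y Z, p1.1 X Y Z]; ring, ⟨w - v, fun X Y Z => ?_⟩⟩
    simp [hw, hA₁app, inner_sub_left]
    ring
  have d2 : IsTotallyAntisymmetricTorsion (B₂ - A₂) := by
    obtain ⟨t2, h2'⟩ := q2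
    exact ⟨fun X Y Z => by simp [t2 X Y Z, p2.1 X Y Z]; ring,
      fun X Y Z => by simp [h2' X Y Z, p2.2 X Y Z]; ring⟩
  have d3 : IsCartanTorsion (B₃ - A₃) := by
    obtain ⟨t3, cy3, c3⟩ := q3
    refine ⟨fun X Y Z => by simp [t3 X Y Z, p3.1 X Y Z]; ring, fun X Y Z => ?_, fun Z => ?_⟩
    · have := cy3 X Y Z; have := p3.2.1 X Y Z
      simp only [sub_apply3, LinearMap.sub_apply]
      linarith
    · have h := c3 Z; have h' := p3.2.2 Z
      rw [c12] at h h' ⊢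
      simp only [sub_apply3, LinearMap.sub_apply, Finset.sum_sub_distrib]
      rw [h, h']; ring
  have hzero : (B₁ - A₁) + (B₂ - A₂) + (B₃ - A₃) = 0 := by
    have : B₁ + B₂ + B₃ = A₁ + A₂ + A₃ := by
      rw [← hq, hA₃]; abel
    rw [show B₁ - A₁ + (B₂ - A₂) + (B₃ - A₃) = (B₁ + B₂ + B₃) - (A₁ + A₂ + A₃) by module, this]
    exact sub_self (A₁ + A₂ + A₃)
  obtain ⟨z1, z2, z3⟩ := zero_sum_case hdim d1 d2 d3 hzero
  have e1 : B₁ = A₁ := eq_of_sub_eq_zero z1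
  have e2 : B₂ = A₂ := eq_of_sub_eq_zero z2
  have e3 : B₃ = A₃ := eq_of_sub_eq_zero z3
  simp [e1, e2, e3]
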